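/- Assuming the induced Menger theorem — there is a function f_M : ℕ² → ℕ such that for every connected graph G with maximum degree at most Δ and X, Y ⊆ V(G), either G contains k pairwise anti-complete (X,Y)-paths, or some Z ⊆ V(G) with |Z| ≤ f_M(k, Δ) meets every (X,Y)-path — there exists a function f_A : ℕ² → ℕ such that for every connected graph G with maximum degree at most Δ and every A ⊆ V(G) with |A| ≥ f_A(d, Δ), G contains d pairwise anti-complete A-paths. -/
import Mathlib


universe u

/-- An `A`-path in `G`: a path of length at least `1` whose two end-vertices lie in `A`. -/
structure SimpleGraph.APath {V : Type*} (G : SimpleGraph V) (A : Set V) where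
  {u : V}
  {v : V}
  walk : G.Walk u v
  isPath : walk.IsPath
  fst_mem : u ∈ A
  snd_mem : v ∈ A
  length_pos : 0 < walk.length

/-- An `(X, Y)`-path in `G`: a path with one end-vertex in `X` and the other in `Y`. -/
structure SimpleGraph.XYPath {V : Type*} (G : SimpleGraph V) (X Y : Set V) where
  {u : V}
  {v : V}
  walk : G.Walk u v
  isPath : walk.IsPath
  fst_mem : u ∈ X
  snd_mem : v ∈ Y

/-- Two vertex sets are anti-complete in `G`: disjoint with no edge between them. -/
def AntiComplete {V : Type*} (G : SimpleGraph V) (S T : Set V) : Prop :=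
  Disjoint S T ∧ ∀ x ∈ S, ∀ y ∈ T, ¬G.Adj x y

open SimpleGraph Finset

private lemma antiComplete_mono {V : Type*} {G : SimpleGraph V} {S T S' T' : Set V}
    (h : AntiComplete G S T) (hS : S' ⊆ S) (hT : T' ⊆ T) : AntiComplete G S' T' :=
  ⟨h.1.mono hS hT, fun x hx y hy => h.2 x (hS hx) y (hT hy)⟩

private lemma antiComplete_symm {V : Type*} {G : SimpleGraph V} {S T : Set V}
    (h : AntiComplete G S T) : AntiComplete G T S :=
  ⟨h.1.symm, fun x hx y hy hadj => h.2 y hy x hx hadj.symm⟩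

/-- A walk whose support lies in `C` yields reachability in the induced graph on `C`. -/
private lemma reachable_induce_of_walk {V : Type*} {G : SimpleGraph V} {C : Set V} :
    ∀ {a b : V} (p : G.Walk a b), (∀ w ∈ p.support, w ∈ C) → ∀ (ha : a ∈ C) (hb : b ∈ C),
      (G.induce C).Reachable ⟨a, ha⟩ ⟨b, hb⟩ := by
  intro a b p
  induction p with
  | nil => intro _ ha hb; exact Reachable.refl _
  | @cons x y z hxy q ih =>
    intro hp ha hb
    have hy : y ∈ C := hp y (by simp)
    have hadj : (G.induce C).Adj ⟨x, ha⟩ ⟨y, hy⟩ := by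
      simp only [comap_adj, Function.Embedding.coe_subtype]
      exact hxy
    exact hadj.reachable.trans (ih (fun w hw => hp w (by simp [hw])) hy hb)

/-- Walking from outside `S` into `S`, one finds a vertex adjacent to `S`
reachable by a walk avoiding `S`. -/
private lemma exists_boundary {V : Type*} {G : SimpleGraph V} {S : Set V} :
    ∀ {a t : V} (p : G.Walk a t), a ∉ S → t ∈ S →
      ∃ b, (∃ z ∈ S, G.Adj b z) ∧ ∃ q : G.Walk a b, ∀ w ∈ q.support, w ∉ S := by
  intro a t p
  induction p with
  | nil => intro ha ht; exact absurd ht ha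
  | @cons x y z hxy q ih =>
    intro ha ht
    by_cases hy : y ∈ S
    · exact ⟨x, ⟨y, hy, hxy⟩, Walk.nil, by simp [ha]⟩
    · obtain ⟨b, hb, r, hr⟩ := ih hy ht
      refine ⟨b, hb, Walk.cons hxy r, ?_⟩
      intro w hw
      rcases List.mem_cons.mp (by simpa [Walk.support_cons] using hw) with rfl | hw'
      · exact ha
      · exact hr w hw'

private lemma append_avoid {V : Type*} {G : SimpleGraph V} {S : Set V} {a b c : V}
    (p : G.Walk a b) (q : G.Walk c b) (hp : ∀ w ∈ p.support, w ∉ S)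
    (hq : ∀ w ∈ q.support, w ∉ S) :
    ∃ r : G.Walk a c, ∀ w ∈ r.support, w ∉ S := by
  refine ⟨p.append q.reverse, ?_⟩
  intro w hw
  rcases (Walk.mem_support_append_iff _ _).1 hw with h | h
  · exact hp w h
  · exact hq w (by simpa [Walk.support_reverse] using h)

private lemma degree_induce_le {V : Type*} {G : SimpleGraph V} {C : Set V} (v : ↥C)
    [Fintype ((G.induce C).neighborSet v)] [Fintype (G.neighborSet (v : V))] :
    (G.induce C).degree v ≤ G.degree (v : V) := by
  rw [← SimpleGraph.card_neighborSet_eq_degree, ← SimpleGraph.card_neighborSet_eq_degree]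
  have : Function.Injective
      (fun x : ((G.induce C).neighborSet v) => (⟨((x : ↥C) : V), x.2⟩ :
          G.neighborSet (v : V))) := by
    intro x y hxy
    ext
    simpa [Subtype.ext_iff] using hxy
  exact Fintype.card_le_of_injective _ this

/-- Assuming the induced Menger theorem (with function `f_M`), there is a
function `f_A` such that every connected graph `G` with maximum degree at most `Δ` and every
set `A` of at least `f_A d Δ` vertices contains `d` pairwise anti-complete `A`-paths. -/
theorem stmt_19 (f_M : ℕ → ℕ → ℕ)
    (menger : ∀ (V : Type u) [Fintype V] [DecidableEq V] (G : SimpleGraph V)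
      [DecidableRel G.Adj] (Δ k : ℕ), G.Connected → (∀ v : V, G.degree v ≤ Δ) →
      ∀ X Y : Set V,
        (∃ P : Fin k → G.XYPath X Y,
          ∀ i j, i ≠ j → AntiComplete G
            {x | x ∈ (P i).walk.support} {x | x ∈ (P j).walk.support}) ∨
        (∃ Z : Finset V, Z.card ≤ f_M k Δ ∧
          ∀ x ∈ X, ∀ y ∈ Y, ∀ p : G.Walk x y, ∃ z ∈ Z, z ∈ p.support)) :
    ∃ f_A : ℕ → ℕ → ℕ,
      ∀ (V : Type u) [Fintype V] [DecidableEq V] (G : SimpleGraph V)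
        [DecidableRel G.Adj] (Δ d : ℕ), G.Connected → (∀ v : V, G.degree v ≤ Δ) →
        ∀ A : Finset V, f_A d Δ ≤ A.card →
          ∃ P : Fin d → G.APath (↑A : Set V),
            ∀ i j, i ≠ j → AntiComplete G
              {x | x ∈ (P i).walk.support} {x | x ∈ (P j).walk.support} := by
  classical
  refine ⟨fun d Δ => Nat.rec 0
    (fun e ih => (Δ * f_M (e+1) Δ * ih + f_M (e+1) Δ + 1)
      + (Δ * f_M (e+1) Δ + f_M (e+1) Δ + 1)) d, ?_⟩
  set fA : ℕ → ℕ → ℕ := fun d Δ => Nat.rec 0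
    (fun e ih => (Δ * f_M (e+1) Δ * ih + f_M (e+1) Δ + 1)
      + (Δ * f_M (e+1) Δ + f_M (e+1) Δ + 1)) d with hfA
  have key : ∀ (d Δ : ℕ) (V : Type u) [Fintype V] [DecidableEq V] (G : SimpleGraph V)
      [DecidableRel G.Adj], G.Connected → (∀ v : V, G.degree v ≤ Δ) →
      ∀ A : Finset V, fA d Δ ≤ A.card →
        ∃ P : Fin d → G.APath (↑A : Set V),
          ∀ i j, i ≠ j → AntiComplete G
            {x | x ∈ (P i).walk.support} {x | x ∈ (P j).walk.support} := by
    intro d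
    induction d with
    | zero =>
      intro Δ V _ _ G _ _ _ A _
      exact ⟨Fin.elim0, fun i => i.elim0⟩
    | succ d ih =>
      intro Δ V _ _ G _ hconn hdeg A hA
      set m := f_M (d+1) Δ with hm
      have hAcard : (Δ * m * fA d Δ + m + 1) + (Δ * m + m + 1) ≤ A.card := hA
      obtain ⟨Xf, hXsub, hXcard⟩ :=
        Finset.exists_subset_card_eq (n := Δ * m * fA d Δ + m + 1)
          (le_trans (Nat.le_add_right _ _) hAcard)
      set Yf : Finset V := A \ Xf with hYf
      have hYcard : Δ * m + m + 1 ≤ Yf.card := by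
        have h1 : Yf.card = A.card - Xf.card := Finset.card_sdiff_of_subset hXsub
        omega
      rcases menger V G Δ (d+1) hconn hdeg (↑Xf) (↑Yf) with ⟨P, hP⟩ | ⟨Z, hZcard, hZ⟩
      · -- Outcome 1: the X-Y paths are already A-paths.
        have hlen : ∀ i, 0 < (P i).walk.length := by
          intro i
          rcases Nat.eq_zero_or_pos (P i).walk.length with h0 | h
          · exfalso
            have heq := SimpleGraph.Walk.eq_of_length_eq_zero h0
            have hu : (P i).u ∈ Xf := by exact_mod_cast (P i).fst_mem
            have hv : (P i).v ∈ Yf := by exact_mod_cast (P i).snd_mem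
            rw [heq] at hu
            exact (Finset.mem_sdiff.mp hv).2 hu
          · exact h
        refine ⟨fun i => ⟨(P i).walk, (P i).isPath, ?_, ?_, hlen i⟩, fun i j hij => hP i j hij⟩
        · exact hXsub (by exact_mod_cast (P i).fst_mem)
        · have hv : (P i).v ∈ Yf := by exact_mod_cast (P i).snd_mem
          exact Finset.mem_coe.mpr (Finset.mem_sdiff.mp hv).1
      · -- Outcome 2: a small separator `Z`.
        set SZ : Set V := (↑Z : Set V) with hSZ
        obtain ⟨x₁, hx₁⟩ : Xf.Nonempty := Finset.card_pos.mp (by omega)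
        obtain ⟨y₁, hy₁⟩ : Yf.Nonempty := Finset.card_pos.mp (by omega)
        obtain ⟨p₁⟩ := hconn.preconnected x₁ y₁
        obtain ⟨z₀, hz₀Z, _⟩ := hZ x₁ (Finset.mem_coe.mpr hx₁) y₁ (Finset.mem_coe.mpr hy₁) p₁
        have hbd : ∀ v : V, v ∉ SZ → ∃ b, (∃ z ∈ SZ, G.Adj b z) ∧
            ∃ q : G.Walk v b, ∀ w ∈ q.support, w ∉ SZ := by
          intro v hv
          obtain ⟨p⟩ := hconn.preconnected v z₀
          exact exists_boundary p hv (Finset.mem_coe.mpr hz₀Z)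
        set f : V → V := fun v => if h : v ∉ SZ then (hbd v h).choose else v with hf
        have hfspec : ∀ v, ∀ h : v ∉ SZ, (∃ z ∈ SZ, G.Adj (f v) z) ∧
            ∃ q : G.Walk v (f v), ∀ w ∈ q.support, w ∉ SZ := by
          intro v h
          have he : f v = (hbd v h).choose := by rw [hf]; simp only [dif_pos h]
          rw [he]
          exact (hbd v h).choose_spec
        set B : Finset V := Z.biUnion (fun z => G.neighborFinset z) with hB
        have hBcard : B.card ≤ m * Δ := by
          refine le_trans (Finset.card_biUnion_le_card_mul _ _ Δ (fun z _ => ?_))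
            (Nat.mul_le_mul_right _ hZcard)
          rw [SimpleGraph.card_neighborFinset_eq_degree]
          exact hdeg z
        have hmaps : ∀ s : Finset V, ∀ v ∈ s \ Z, f v ∈ B := by
          intro s v hv
          have hvnot : v ∉ SZ := fun hc => (Finset.mem_sdiff.mp hv).2 (Finset.mem_coe.mp hc)
          obtain ⟨⟨z, hzS, hadj⟩, _⟩ := hfspec v hvnot
          exact Finset.mem_biUnion.mpr ⟨z, Finset.mem_coe.mp hzS,
            (SimpleGraph.mem_neighborFinset _ _ _).mpr hadj.symm⟩
        have hcomm : m * Δ * fA d Δ = Δ * m * fA d Δ := by ring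
        have hXZ : B.card * fA d Δ < (Xf \ Z).card := by
          have h1 : Xf.card - Z.card ≤ (Xf \ Z).card := Finset.le_card_sdiff _ _
          have h2 : B.card * fA d Δ ≤ m * Δ * fA d Δ := Nat.mul_le_mul_right _ hBcard
          omega
        have hYZ : B.card * 1 < (Yf \ Z).card := by
          have h1 : Yf.card - Z.card ≤ (Yf \ Z).card := Finset.le_card_sdiff _ _
          have h2 : m * Δ = Δ * m := Nat.mul_comm m Δ
          omega
        obtain ⟨bX, hbXB, hbXcard⟩ := Finset.exists_lt_card_fiber_of_mul_lt_card_of_maps_to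
          (fun v hv => hmaps Xf v hv) hXZ
        obtain ⟨bY, hbYB, hbYcard⟩ := Finset.exists_lt_card_fiber_of_mul_lt_card_of_maps_to
          (fun v hv => hmaps Yf v hv) hYZ
        set FX : Finset V := (Xf \ Z).filter (fun v => f v = bX) with hFXdef
        set FY : Finset V := (Yf \ Z).filter (fun v => f v = bY) with hFYdef
        have hFXmem : ∀ v ∈ FX, v ∈ Xf ∧ v ∉ SZ ∧ f v = bX := by
          intro v hv
          obtain ⟨hv1, hv2⟩ := Finset.mem_filter.mp hv
          exact ⟨(Finset.mem_sdiff.mp hv1).1,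
            fun hc => (Finset.mem_sdiff.mp hv1).2 (Finset.mem_coe.mp hc), hv2⟩
        have hFYmem : ∀ v ∈ FY, v ∈ Yf ∧ v ∉ SZ ∧ f v = bY := by
          intro v hv
          obtain ⟨hv1, hv2⟩ := Finset.mem_filter.mp hv
          exact ⟨(Finset.mem_sdiff.mp hv1).1,
            fun hc => (Finset.mem_sdiff.mp hv1).2 (Finset.mem_coe.mp hc), hv2⟩
        obtain ⟨x₀, hx₀F⟩ : FX.Nonempty := Finset.card_pos.mp (by omega)
        obtain ⟨y₀, hy₀F, y₂, hy₂F, hyne⟩ := Finset.one_lt_card.mp (show 1 < FY.card by omega)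
        have hfib : ∀ {b v w : V}, v ∉ SZ → w ∉ SZ → f v = b → f w = b →
            ∃ r : G.Walk v w, ∀ u ∈ r.support, u ∉ SZ := by
          intro b v w hv hw hfv hfw
          obtain ⟨_, qv, hqv⟩ := hfspec v hv
          obtain ⟨_, qw, hqw⟩ := hfspec w hw
          have hE : f w = f v := by rw [hfv, hfw]
          exact append_avoid qv (qw.copy rfl hE) hqv
            (by rw [Walk.support_copy]; exact hqw)
        set CX : Set V := {w | ∃ q : G.Walk w x₀, ∀ u ∈ q.support, u ∉ SZ} with hCXdef
        set CY : Set V := {w | ∃ q : G.Walk w y₀, ∀ u ∈ q.support, u ∉ SZ} with hCYdef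
        have hclosed : ∀ {t w : V} (q : G.Walk w t), (∀ u ∈ q.support, u ∉ SZ) →
            ∀ u ∈ q.support, ∃ r : G.Walk u t, ∀ x ∈ r.support, x ∉ SZ := by
          intro t w q hq u hu
          exact ⟨q.dropUntil u hu, fun x hx => hq x (Walk.support_dropUntil_subset q hu hx)⟩
        have hx₀CX : x₀ ∈ CX := ⟨Walk.nil, by
          intro u hu
          rw [Walk.support_nil, List.mem_singleton] at hu
          rw [hu]
          exact (hFXmem x₀ hx₀F).2.1⟩
        have hy₀CY : y₀ ∈ CY := ⟨Walk.nil, by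
          intro u hu
          rw [Walk.support_nil, List.mem_singleton] at hu
          rw [hu]
          exact (hFYmem y₀ hy₀F).2.1⟩
        have hFXCX : ∀ v ∈ FX, v ∈ CX := by
          intro v hv
          exact hfib (hFXmem v hv).2.1 (hFXmem x₀ hx₀F).2.1 (hFXmem v hv).2.2
            (hFXmem x₀ hx₀F).2.2
        have hCXout : ∀ w ∈ CX, w ∉ SZ := by
          rintro w ⟨q, hq⟩
          exact hq w q.start_mem_support
        have hCYout : ∀ w ∈ CY, w ∉ SZ := by
          rintro w ⟨q, hq⟩
          exact hq w q.start_mem_support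
        -- the two regions are anti-complete
        have hx₀X : x₀ ∈ Xf := (hFXmem x₀ hx₀F).1
        have hy₀Y : y₀ ∈ Yf := (hFYmem y₀ hy₀F).1
        have hsep : ∀ u ∈ CX, ∀ v ∈ CY, u ≠ v ∧ ¬ G.Adj u v := by
          intro u hu v hv
          obtain ⟨qu, hqu⟩ := hu
          obtain ⟨qv, hqv⟩ := hv
          constructor
          · rintro rfl
            obtain ⟨r, hr⟩ := append_avoid qu.reverse qv.reverse
              (by intro w hw; rw [Walk.support_reverse, List.mem_reverse] at hw; exact hqu w hw)
              (by intro w hw; rw [Walk.support_reverse, List.mem_reverse] at hw; exact hqv w hw)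
            obtain ⟨z, hzZ, hzr⟩ := hZ x₀ (Finset.mem_coe.mpr hx₀X) y₀
              (Finset.mem_coe.mpr hy₀Y) r
            exact hr z hzr (Finset.mem_coe.mpr hzZ)
          · intro hadj
            obtain ⟨r, hr⟩ := append_avoid qu.reverse (Walk.cons hadj qv).reverse
              (by intro w hw; rw [Walk.support_reverse, List.mem_reverse] at hw; exact hqu w hw)
              (by
                intro w hw
                rw [Walk.support_reverse, List.mem_reverse, Walk.support_cons,
                  List.mem_cons] at hw
                rcases hw with rfl | hw
                · exact hqu w qu.start_mem_support
                · exact hqv w hw)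
            obtain ⟨z, hzZ, hzr⟩ := hZ x₀ (Finset.mem_coe.mpr hx₀X) y₀
              (Finset.mem_coe.mpr hy₀Y) r
            exact hr z hzr (Finset.mem_coe.mpr hzZ)
        have hXYanti : AntiComplete G CX CY := by
          constructor
          · rw [Set.disjoint_left]
            intro a haX haY
            exact (hsep a haX a haY).1 rfl
          · intro a haX b hbY
            exact (hsep a haX b hbY).2
        -- the induced graph on CX
        haveI : DecidablePred (· ∈ CX) := Classical.decPred _
        haveI : DecidableRel (G.induce CX).Adj := Classical.decRel _
        have hCXconn : (G.induce CX).Connected := by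
          rw [SimpleGraph.connected_iff]
          constructor
          · rintro ⟨u, hu⟩ ⟨v, hv⟩
            have hu' := hu
            have hv' := hv
            obtain ⟨qu, hqu⟩ := hu'
            obtain ⟨qv, hqv⟩ := hv'
            have h1 := reachable_induce_of_walk qu (fun w hw => hclosed qu hqu w hw) hu hx₀CX
            have h2 := reachable_induce_of_walk qv (fun w hw => hclosed qv hqv w hw) hv hx₀CX
            exact h1.trans h2.symm
          · exact ⟨⟨x₀, hx₀CX⟩⟩
        have hdegX : ∀ v : ↥CX, (G.induce CX).degree v ≤ Δ :=
          fun v => le_trans (degree_induce_le v) (hdeg (v : V))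
        set A2 : Finset ↥CX := A.subtype (· ∈ CX) with hA2def
        have hA2card : fA d Δ ≤ A2.card := by
          have hsub : FX ⊆ A.filter (· ∈ CX) := by
            intro v hv
            exact Finset.mem_filter.mpr ⟨hXsub (hFXmem v hv).1, hFXCX v hv⟩
          have h1 : FX.card ≤ (A.filter (· ∈ CX)).card := Finset.card_le_card hsub
          rw [hA2def, Finset.card_subtype]
          omega
        obtain ⟨P', hP'⟩ := ih Δ (↥CX) (G.induce CX) hCXconn hdegX A2 hA2card
        -- map the paths back to G
        have hmapped : ∀ i : Fin d, ∃ Q : G.APath (↑A : Set V),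
            Q.walk.support = ((P' i).walk.map
              (SimpleGraph.Embedding.induce (G := G) CX).toHom).support := by
          intro i
          have h1 : ((P' i).u : V) ∈ A :=
            Finset.mem_subtype.mp (Finset.mem_coe.mp (P' i).fst_mem)
          have h2 : ((P' i).v : V) ∈ A :=
            Finset.mem_subtype.mp (Finset.mem_coe.mp (P' i).snd_mem)
          have h3 : 0 < ((P' i).walk.map (SimpleGraph.Embedding.induce (G := G) CX).toHom).length := by
            rw [Walk.length_map]
            exact (P' i).length_pos
          refine ⟨@SimpleGraph.APath.mk V G (↑A) ((P' i).u : V) ((P' i).v : V)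
            ((P' i).walk.map (SimpleGraph.Embedding.induce (G := G) CX).toHom) ?_ ?_ ?_ ?_, rfl⟩
          · exact Walk.map_isPath_of_injective (SimpleGraph.Embedding.induce (G := G) CX).injective
              (P' i).isPath
          · exact Finset.mem_coe.mpr h1
          · exact Finset.mem_coe.mpr h2
          · exact h3
        choose mapped hmapped_supp using hmapped
        have hMsupp : ∀ i : Fin d, ∀ x ∈ (mapped i).walk.support, x ∈ CX := by
          intro i x hx
          rw [hmapped_supp i, Walk.support_map] at hx
          obtain ⟨x', _, rfl⟩ := List.mem_map.mp hx
          exact x'.2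
        -- the extra path on the Y side
        obtain ⟨r, hr⟩ := hfib (hFYmem y₀ hy₀F).2.1 (hFYmem y₂ hy₂F).2.1
          (hFYmem y₀ hy₀F).2.2 (hFYmem y₂ hy₂F).2.2
        have hQsupp : ∀ x ∈ r.bypass.support, x ∈ CY := by
          intro x hx
          have hx' : x ∈ r.support := Walk.support_bypass_subset r hx
          refine ⟨(r.takeUntil x hx').reverse, ?_⟩
          intro u hu
          rw [Walk.support_reverse, List.mem_reverse] at hu
          exact hr u (Walk.support_takeUntil_subset r hx' hu)
        have hQlen : 0 < r.bypass.length := by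
          rcases Nat.eq_zero_or_pos r.bypass.length with h0 | h
          · exact absurd (Walk.eq_of_length_eq_zero h0) hyne
          · exact h
        have hYsubA : Yf ⊆ A := Finset.sdiff_subset
        set Qpath : G.APath (↑A : Set V) :=
          ⟨r.bypass, Walk.bypass_isPath r,
            Finset.mem_coe.mpr (hYsubA (hFYmem y₀ hy₀F).1),
            Finset.mem_coe.mpr (hYsubA (hFYmem y₂ hy₂F).1), hQlen⟩ with hQdef
        have hQsupp' : ∀ x ∈ Qpath.walk.support, x ∈ CY := hQsupp
        -- anti-completeness facts
        have hMQ : ∀ i : Fin d, AntiComplete G {x | x ∈ (mapped i).walk.support}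
            {x | x ∈ Qpath.walk.support} :=
          fun i => antiComplete_mono hXYanti (fun x hx => hMsupp i x hx)
            (fun x hx => hQsupp' x hx)
        have hMM : ∀ i j : Fin d, i ≠ j → AntiComplete G
            {x | x ∈ (mapped i).walk.support} {x | x ∈ (mapped j).walk.support} := by
          intro i j hij
          have h := hP' i j hij
          constructor
          · rw [Set.disjoint_left]
            intro a hai haj
            rw [Set.mem_setOf_eq, hmapped_supp i, Walk.support_map] at hai
            rw [Set.mem_setOf_eq, hmapped_supp j, Walk.support_map] at haj
            obtain ⟨a1, ha1, rfl⟩ := List.mem_map.mp hai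
            obtain ⟨a2, ha2, he⟩ := List.mem_map.mp haj
            have ha12 : a2 = a1 := (SimpleGraph.Embedding.induce (G := G) CX).injective he
            subst ha12
            exact Set.disjoint_left.mp h.1 ha1 ha2
          · intro a hai b hbj hadj
            rw [Set.mem_setOf_eq, hmapped_supp i, Walk.support_map] at hai
            rw [Set.mem_setOf_eq, hmapped_supp j, Walk.support_map] at hbj
            obtain ⟨a1, ha1, rfl⟩ := List.mem_map.mp hai
            obtain ⟨b1, hb1, rfl⟩ := List.mem_map.mp hbj
            have hadj' : (G.induce CX).Adj a1 b1 := by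
              simp only [comap_adj, Function.Embedding.coe_subtype]
              exact hadj
            exact h.2 a1 ha1 b1 hb1 hadj'
        refine ⟨Fin.cons Qpath mapped, ?_⟩
        intro i j hij
        rcases Fin.eq_zero_or_eq_succ i with rfl | ⟨i', rfl⟩
        · rcases Fin.eq_zero_or_eq_succ j with rfl | ⟨j', rfl⟩
          · exact absurd rfl hij
          · exact antiComplete_symm (hMQ j')
        · rcases Fin.eq_zero_or_eq_succ j with rfl | ⟨j', rfl⟩
          · exact hMQ i'
          · exact hMM i' j' (fun h => hij (by rw [h]))
  intro V _ _ G _ Δ d hconn hdeg A hA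
  exact key d Δ V G hconn hdeg A hA
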